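/- arXiv:1405.1772 — 5 statements merged into one kernel-verified Lean document; each statement's English description precedes it below -/
import Mathlib

section
/- Let p be a prime and let Γ be a p-divisible linearly ordered abelian group (for every x ∈ Γ there exists y ∈ Γ with p·y = x). Then for every δ ∈ Γ and every finite list of elements γ_0, γ_1, …, γ_d ∈ Γ there exists a unique μ ∈ Γ such that δ = min_{0 ≤ i ≤ d} (p^i·μ + γ_i). -/
/-- Let `p` be a prime and `Γ` a `p`-divisible linearly ordered abelian
group. Then for every `δ ∈ Γ` and every finite list `γ_0, …, γ_d ∈ Γ` there is a unique
`μ ∈ Γ` with `δ = min_{0 ≤ i ≤ d} (p^i • μ + γ_i)`. -/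
theorem stmt_0 (p : ℕ) (hp : p.Prime) (Γ : Type*) [AddCommGroup Γ] [LinearOrder Γ] [IsOrderedAddMonoid Γ]
    (hdiv : ∀ x : Γ, ∃ y : Γ, p • y = x)
    (d : ℕ) (γ : Fin (d + 1) → Γ) (δ : Γ) :
    ∃! μ : Γ, δ = Finset.univ.inf' Finset.univ_nonempty
      (fun i : Fin (d + 1) => p ^ (i : ℕ) • μ + γ i) := by
  -- p^n-divisibility
  have hpow : ∀ (n : ℕ) (x : Γ), ∃ y, p ^ n • y = x := by
    intro n
    induction n with
    | zero => intro x; exact ⟨x, one_smul ℕ x⟩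
    | succ n ih =>
      intro x
      obtain ⟨y, hy⟩ := ih x
      obtain ⟨z, hz⟩ := hdiv y
      exact ⟨z, by rw [pow_succ, mul_smul, hz, hy]⟩
  -- strict monotonicity of positive nsmul
  have hsmono : ∀ (n : ℕ), 0 < n → ∀ a b : Γ, a < b → n • a < n • b := by
    intro n hn a b hab
    have h1 : (0 : Γ) < n • (b - a) := nsmul_pos (sub_pos.mpr hab) hn.ne'
    rw [smul_sub] at h1
    exact sub_pos.mp h1
  have hmono : ∀ (n : ℕ) (a b : Γ), a ≤ b → n • a ≤ n • b := by
    intro n a b hab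
    rcases eq_or_lt_of_le hab with rfl | h
    · exact le_rfl
    · rcases Nat.eq_zero_or_pos n with rfl | hn
      · simp
      · exact (hsmono n hn a b h).le
  have hppos : ∀ i : Fin (d + 1), 0 < p ^ (i : ℕ) := fun i => pow_pos hp.pos _
  -- choose solutions of p^i • m i = δ - γ i
  choose m hm using fun i : Fin (d + 1) => hpow (i : ℕ) (δ - γ i)
  set μ : Γ := Finset.univ.sup' Finset.univ_nonempty m with hμ
  have hex : δ = Finset.univ.inf' Finset.univ_nonempty
      (fun i : Fin (d + 1) => p ^ (i : ℕ) • μ + γ i) := by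
    apply le_antisymm
    · apply Finset.le_inf'
      intro i _
      have h1 : m i ≤ μ := Finset.le_sup' m (Finset.mem_univ i)
      have h2 : p ^ (i : ℕ) • m i ≤ p ^ (i : ℕ) • μ := hmono _ _ _ h1
      rw [hm i] at h2
      exact sub_le_iff_le_add.mp h2
    · obtain ⟨j, _, hj⟩ := Finset.exists_mem_eq_sup' (Finset.univ_nonempty) m
      have h3 : p ^ (j : ℕ) • μ + γ j = δ := by
        rw [hμ, hj, hm j]; abel
      exact h3 ▸ Finset.inf'_le _ (Finset.mem_univ j)
  refine ⟨μ, hex, ?_⟩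
  -- uniqueness via strict monotonicity of the inf
  have key : ∀ a b : Γ, a < b →
      Finset.univ.inf' Finset.univ_nonempty (fun i : Fin (d + 1) => p ^ (i : ℕ) • a + γ i) <
      Finset.univ.inf' Finset.univ_nonempty (fun i : Fin (d + 1) => p ^ (i : ℕ) • b + γ i) := by
    intro a b hab
    obtain ⟨j, _, hj⟩ := Finset.exists_mem_eq_inf' (Finset.univ_nonempty)
      (fun i : Fin (d + 1) => p ^ (i : ℕ) • b + γ i)
    rw [hj]
    have h4 : Finset.univ.inf' Finset.univ_nonempty
        (fun i : Fin (d + 1) => p ^ (i : ℕ) • a + γ i) ≤ p ^ (j : ℕ) • a + γ j :=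
      Finset.inf'_le _ (Finset.mem_univ j)
    have h5 := hsmono _ (hppos j) a b hab
    exact lt_of_le_of_lt h4 (add_lt_add_left h5 _)
  intro ν hν
  rcases lt_trichotomy ν μ with h | h | h
  · have := key ν μ h
    rw [← hν, ← hex] at this
    exact absurd this (lt_irrefl _)
  · exact h
  · have := key μ ν h
    rw [← hν, ← hex] at this
    exact absurd this (lt_irrefl _)
end

section
/- Let K be a separably closed field of characteristic p > 0, let d ≥ 1 and let a_0, a_1, …, a_d ∈ K with a_d ≠ 0. Then there exist f_1, …, f_d ∈ K such that for every x ∈ K one has ∑_{i=0}^{d} a_i·x^{p^i} = a_d · (g_d ∘ g_{d−1} ∘ ⋯ ∘ g_1)(x), where g_j : K → K is the map g_j(y) = y^p − f_j·y. -/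
/-- Iterated composition of the maps `y ↦ y^p - f·y`: for a list `[f₁, …, f_d]`,
`iterLin p [f₁, …, f_d] x = (g_d ∘ ⋯ ∘ g_1) x` where `g_j y = y^p - f_j·y`. -/
def iterLin {K : Type*} [Field K] (p : ℕ) : List K → K → K
  | [] => id
  | f :: fs => fun x => iterLin p fs (x ^ p - f * x)

/-- Coefficients of the quotient additive polynomial, defined by downward recursion. -/
def coefB {K : Type*} [Field K] (p d : ℕ) (a : ℕ → K) (f : K) : ℕ → K
  | 0 => 0
  | k + 1 => a (d + 1 - k) + coefB p d a f k * f ^ p ^ (d + 1 - k)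

lemma coefB_key {K : Type*} [Field K] (p : ℕ) [Fact p.Prime] [CharP K p] (d : ℕ)
    (a : ℕ → K) (f : K) (x : K) :
    ∑ i ∈ Finset.range (d + 2), a i * x ^ p ^ i
      = ∑ j ∈ Finset.range (d + 1), coefB p d a f (d + 1 - j) * (x ^ p - f * x) ^ p ^ j
        + (a 0 + coefB p d a f (d + 1) * f) * x := by
  set b : ℕ → K := fun j => coefB p d a f (d + 1 - j) with hb
  have hrec : ∀ j ≤ d, b j = a (j + 1) + b (j + 1) * f ^ p ^ (j + 1) := by
    intro j hj
    have h1 : d + 1 - j = (d - j) + 1 := by omega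
    have h2 : d + 1 - (d - j) = j + 1 := by omega
    have h3 : d + 1 - (j + 1) = d - j := by omega
    simp only [hb, h1, h3, coefB, h2]
  have hb0 : b 0 = coefB p d a f (d + 1) := by simp [hb]
  have hbtop : b (d + 1) = 0 := by simp [hb, coefB]
  set T : ℕ → K := fun j => b j * f ^ p ^ j * x ^ p ^ j with hT
  have tele : ∑ j ∈ Finset.range (d + 1), T (j + 1) + T 0
      = ∑ j ∈ Finset.range (d + 1), T j + T (d + 1) := by
    rw [← Finset.sum_range_succ', Finset.sum_range_succ]
  have hTtop : T (d + 1) = 0 := by simp [hT, hbtop]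
  have hT0 : T 0 = b 0 * f * x := by simp [hT]
  calc ∑ i ∈ Finset.range (d + 2), a i * x ^ p ^ i
      = ∑ j ∈ Finset.range (d + 1), a (j + 1) * x ^ p ^ (j + 1) + a 0 * x := by
        rw [Finset.sum_range_succ']; simp
    _ = ∑ j ∈ Finset.range (d + 1), (b j * x ^ p ^ (j + 1) - T (j + 1)) + a 0 * x := by
        congr 1
        refine Finset.sum_congr rfl fun j hj => ?_
        rw [Finset.mem_range] at hj
        rw [hrec j (by omega)]
        simp only [hT]
        ring
    _ = ∑ j ∈ Finset.range (d + 1), b j * x ^ p ^ (j + 1)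
          - ∑ j ∈ Finset.range (d + 1), T (j + 1) + a 0 * x := by
        rw [Finset.sum_sub_distrib]
    _ = ∑ j ∈ Finset.range (d + 1), b j * x ^ p ^ (j + 1)
          - ∑ j ∈ Finset.range (d + 1), T j + (a 0 + b 0 * f) * x := by
        have := tele
        rw [hTtop, hT0] at this
        linear_combination -this
    _ = ∑ j ∈ Finset.range (d + 1), (b j * x ^ p ^ (j + 1) - T j)
          + (a 0 + b 0 * f) * x := by rw [Finset.sum_sub_distrib]
    _ = ∑ j ∈ Finset.range (d + 1), b j * (x ^ p - f * x) ^ p ^ j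
          + (a 0 + b 0 * f) * x := by
        congr 1
        refine Finset.sum_congr rfl fun j hj => ?_
        rw [sub_pow_char_pow, mul_pow, ← pow_mul, ← pow_succ']
        simp only [hT]
        ring
    _ = _ := by rw [hb0]

open Polynomial in
lemma exists_nonzero_root (p : ℕ) [hp : Fact p.Prime] (K : Type*) [Field K] [CharP K p]
    [IsSepClosed K] (n : ℕ) (hn : 1 ≤ n) (a : ℕ → K) (ha0 : a 0 ≠ 0) (han : a n ≠ 0) :
    ∃ α : K, α ≠ 0 ∧ ∑ i ∈ Finset.range (n + 1), a i * α ^ p ^ i = 0 := by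
  have hp2 : 2 ≤ p := hp.out.two_le
  set S : K[X] := ∑ i ∈ Finset.range (n + 1), C (a i) * X ^ (p ^ i - 1) with hS
  have hXS : X * S = ∑ i ∈ Finset.range (n + 1), C (a i) * X ^ (p ^ i) := by
    rw [hS, Finset.mul_sum]
    refine Finset.sum_congr rfl fun i _ => ?_
    have h0 : 1 ≤ p ^ i := Nat.one_le_pow _ _ (by omega)
    have h1 : X * X ^ (p ^ i - 1) = (X : K[X]) ^ p ^ i := by
      rw [← pow_succ']
      congr 1
      omega
    rw [mul_left_comm, h1]
  set P : K[X] := X * S with hP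
  have hder : derivative P = C (a 0) := by
    rw [hXS, derivative_sum]
    rw [Finset.sum_eq_single_of_mem 0 (Finset.mem_range.2 (by omega))]
    · simp
    · intro i _ hi
      rw [derivative_C_mul_X_pow]
      have : ((p ^ i : ℕ) : K) = 0 := by
        rw [Nat.cast_pow, CharP.cast_eq_zero K p, zero_pow hi]
      rw [this, mul_zero, C_0, zero_mul]
  have hPsep : P.Separable := by
    rw [Polynomial.Separable, hder]
    exact ⟨0, C (a 0)⁻¹, by rw [zero_mul, zero_add, ← C_mul, inv_mul_cancel₀ ha0, C_1]⟩
  have hSsep : S.Separable := hPsep.of_dvd ⟨X, mul_comm _ _⟩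
  have hcoeff : S.coeff (p ^ n - 1) = a n := by
    rw [hS, finset_sum_coeff]
    rw [Finset.sum_eq_single_of_mem n (Finset.mem_range.2 (by omega))]
    · rw [coeff_C_mul, coeff_X_pow, if_pos rfl, mul_one]
    · intro i hi hin
      rw [Finset.mem_range] at hi
      rw [coeff_C_mul, coeff_X_pow, if_neg, mul_zero]
      have h1 : p ^ i < p ^ n := Nat.pow_lt_pow_right (by omega) (by omega)
      have h2 : 1 ≤ p ^ i := Nat.one_le_pow _ _ (by omega)
      omega
  have hdeg : S.degree ≠ 0 := by
    have h1 : 1 ≤ p ^ n - 1 := by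
      have : p ≤ p ^ n := Nat.le_self_pow (by omega) p
      omega
    have h2 : 0 < S.natDegree :=
      lt_of_lt_of_le h1 (le_natDegree_of_ne_zero (hcoeff ▸ han))
    exact (natDegree_pos_iff_degree_pos.1 h2).ne'
  obtain ⟨α, hα⟩ := IsSepClosed.exists_root S hdeg hSsep
  have hαne : α ≠ 0 := by
    rintro rfl
    have : S.eval 0 = a 0 := by
      rw [hS, eval_finset_sum]
      rw [Finset.sum_eq_single_of_mem 0 (Finset.mem_range.2 (by omega))]
      · simp
      · intro i _ hi
        have h2 : 1 ≤ p ^ i := Nat.one_le_pow _ _ (by omega)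
        have h3 : p ^ i - 1 ≠ 0 := by
          have : p ≤ p ^ i := Nat.le_self_pow hi p
          omega
        simp [zero_pow h3]
    exact ha0 (this ▸ hα)
  refine ⟨α, hαne, ?_⟩
  have hPeval : P.eval α = 0 := by
    rw [hP, eval_mul, hα.eq_zero, mul_zero]
  have : P.eval α = ∑ i ∈ Finset.range (n + 1), a i * α ^ p ^ i := by
    rw [hXS, eval_finset_sum]
    refine Finset.sum_congr rfl fun i _ => ?_
    rw [eval_mul, eval_C, eval_pow, eval_X]
  rw [← this, hPeval]

lemma aux_stmt (p : ℕ) [hp : Fact p.Prime] (K : Type*) [Field K] [CharP K p]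
    [IsSepClosed K] (d : ℕ) :
    ∀ a : ℕ → K, a (d + 1) ≠ 0 →
      ∃ L : List K, L.length = d + 1 ∧
        ∀ x : K, ∑ i ∈ Finset.range (d + 2), a i * x ^ p ^ i
          = a (d + 1) * iterLin p L x := by
  induction d with
  | zero =>
    intro a ha
    refine ⟨[-(a 0 / a 1)], rfl, fun x => ?_⟩
    simp only [iterLin, Finset.sum_range_succ, Finset.sum_range_zero, pow_zero, pow_one,
      zero_add, id_eq]
    field_simp
    ring
  | succ d ih =>
    intro a ha
    by_cases ha0 : a 0 = 0
    · obtain ⟨L', hL'len, hL'⟩ := ih (fun i => a (i + 1)) ha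
      refine ⟨0 :: L', by simp [hL'len], fun x => ?_⟩
      rw [Finset.sum_range_succ']
      simp only [pow_zero, pow_one, ha0, zero_mul, add_zero]
      have : ∀ i, x ^ p ^ (i + 1) = (x ^ p) ^ p ^ i := by
        intro i; rw [← pow_mul, ← pow_succ']
      calc ∑ i ∈ Finset.range (d + 2), a (i + 1) * x ^ p ^ (i + 1)
          = ∑ i ∈ Finset.range (d + 2), a (i + 1) * (x ^ p) ^ p ^ i := by
            refine Finset.sum_congr rfl fun i _ => by rw [this]
        _ = a (d + 2) * iterLin p L' (x ^ p) := hL' (x ^ p)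
        _ = a (d + 2) * iterLin p (0 :: L') x := by
            simp [iterLin]
    · obtain ⟨α, hαne, hαroot⟩ := exists_nonzero_root p K (d + 2) (by omega) a ha0 ha
      set f : K := α ^ (p - 1) with hf
      have hgα : α ^ p - f * α = 0 := by
        rw [hf, ← pow_succ]
        have h : p - 1 + 1 = p := by have := hp.out.two_le; omega
        rw [h, sub_self]
      set b : ℕ → K := fun j => coefB p (d + 1) a f (d + 2 - j) with hb
      have hkey : ∀ x : K, ∑ i ∈ Finset.range (d + 3), a i * x ^ p ^ i
          = ∑ j ∈ Finset.range (d + 2), b j * (x ^ p - f * x) ^ p ^ j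
            + (a 0 + b 0 * f) * x := by
        intro x
        have := coefB_key p (d + 1) a f x
        simp only [hb]; exact this
      have hzero : a 0 + b 0 * f = 0 := by
        have h1 := hkey α
        rw [hαroot] at h1
        have h2 : ∑ j ∈ Finset.range (d + 2), b j * (α ^ p - f * α) ^ p ^ j = 0 := by
          refine Finset.sum_eq_zero fun j _ => ?_
          rw [hgα, zero_pow (pow_ne_zero _ hp.out.ne_zero), mul_zero]
        rw [h2, zero_add] at h1
        exact (mul_eq_zero.1 h1.symm).resolve_right hαne
      have hbtop : b (d + 1) = a (d + 2) := by
        simp [hb, coefB]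
      obtain ⟨L', hL'len, hL'⟩ := ih b (hbtop ▸ ha)
      refine ⟨f :: L', by simp [hL'len], fun x => ?_⟩
      calc ∑ i ∈ Finset.range (d + 3), a i * x ^ p ^ i
          = ∑ j ∈ Finset.range (d + 2), b j * (x ^ p - f * x) ^ p ^ j := by
            rw [hkey x, hzero, zero_mul, add_zero]
        _ = b (d + 1) * iterLin p L' (x ^ p - f * x) := hL' _
        _ = a (d + 2) * iterLin p (f :: L') x := by rw [hbtop]; rfl

/-- Let `K` be a separably closed field of characteristic `p > 0`,
`d ≥ 1` and `a_0, …, a_d ∈ K` with `a_d ≠ 0`. Then there exist `f_1, …, f_d ∈ K` such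
that `∑_{i=0}^d a_i·x^{p^i} = a_d · (g_d ∘ ⋯ ∘ g_1)(x)` for all `x`, where
`g_j(y) = y^p − f_j·y`. -/
theorem stmt_3 (p : ℕ) (hp : p.Prime) (K : Type*) [Field K] [CharP K p] [IsSepClosed K]
    (d : ℕ) (hd : 1 ≤ d) (a : ℕ → K) (had : a d ≠ 0) :
    ∃ L : List K, L.length = d ∧
      ∀ x : K, ∑ i ∈ Finset.range (d + 1), a i * x ^ (p ^ i) = a d * iterLin p L x := by
  haveI : Fact p.Prime := ⟨hp⟩
  obtain ⟨e, rfl⟩ : ∃ e, d = e + 1 := ⟨d - 1, by omega⟩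
  exact aux_stmt p K e a had
end

section
/- Let (K, v) be a separably closed valued field of characteristic p > 0 with valuation ring O. Let d ≥ 1 and let a_0, …, a_d ∈ O with a_d ≠ 0 and with at least one a_i a unit of O (v(a_i) = 0). Then there exist elements c_1, e_1, …, c_d, e_d ∈ O with min(v(c_j), v(e_j)) = 0 for each j, such that for every x ∈ K one has ∑_{i=0}^{d} a_i·x^{p^i} = (L_d ∘ L_{d−1} ∘ ⋯ ∘ L_1)(x), where L_j : K → K is the map L_j(y) = c_j·y^p − e_j·y. -/
/-- A valuation on a field `K` with values in the linearly ordered abelian group `Γ`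
(together with `∞ = ⊤`), surjective onto `Γ`, i.e. `Γ = v(K^×)`. -/
structure ValuedFieldAux (K : Type*) [Field K] (Γ : Type*)
    [AddCommGroup Γ] [LinearOrder Γ] [IsOrderedAddMonoid Γ] where
  v : K → WithTop Γ
  v_eq_top_iff : ∀ x : K, v x = ⊤ ↔ x = 0
  v_mul : ∀ x y : K, v (x * y) = v x + v y
  v_add : ∀ x y : K, min (v x) (v y) ≤ v (x + y)
  v_surj : ∀ γ : Γ, ∃ x : K, v x = (γ : WithTop Γ)

/-- Iterated composition of the maps `y ↦ c·y^p - e·y`: for a list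
`[(c₁,e₁), …, (c_d,e_d)]`, `iterLin2 p L x = (L_d ∘ ⋯ ∘ L_1) x` where
`L_j y = c_j·y^p - e_j·y`. -/
def iterLin2 {K : Type*} [Field K] (p : ℕ) : List (K × K) → K → K
  | [] => id
  | ce :: rest => fun x => iterLin2 p rest (ce.1 * x ^ p - ce.2 * x)

namespace ValuedFieldAux

variable {K : Type*} [Field K] {Γ : Type*} [AddCommGroup Γ] [LinearOrder Γ] [IsOrderedAddMonoid Γ]
variable (vf : ValuedFieldAux K Γ)

lemma v_zero : vf.v 0 = ⊤ := (vf.v_eq_top_iff 0).2 rfl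

lemma v_ne_top {x : K} (hx : x ≠ 0) : vf.v x ≠ ⊤ := fun h => hx ((vf.v_eq_top_iff x).1 h)

lemma v_one : vf.v 1 = 0 := by
  have h := vf.v_mul 1 1
  rw [one_mul] at h
  obtain ⟨g, hg⟩ := WithTop.ne_top_iff_exists.1 (vf.v_ne_top (one_ne_zero (α := K)))
  rw [← hg, ← WithTop.coe_add, WithTop.coe_eq_coe] at h
  rw [← hg, left_eq_add.mp h]
  rfl

lemma v_neg (x : K) : vf.v (-x) = vf.v x := by
  have hm : vf.v (-1 : K) = 0 := by
    have h := vf.v_mul (-1 : K) (-1)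
    rw [neg_mul_neg, one_mul, vf.v_one] at h
    obtain ⟨g, hg⟩ := WithTop.ne_top_iff_exists.1
      (vf.v_ne_top (neg_ne_zero.2 (one_ne_zero (α := K))))
    rw [← hg, ← WithTop.coe_add, eq_comm, WithTop.coe_eq_zero] at h
    have hg0 : g = 0 := by
      rcases lt_trichotomy g 0 with hlt | he | hgt
      · exact absurd h (ne_of_lt (by simpa using add_lt_add hlt hlt))
      · exact he
      · exact absurd h (ne_of_gt (by simpa using add_lt_add hgt hgt))
    rw [← hg, hg0]
    rfl
  have h := vf.v_mul (-1) x
  rw [neg_one_mul] at h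
  rw [h, hm, zero_add]

lemma v_sub_ge (x y : K) : min (vf.v x) (vf.v y) ≤ vf.v (x - y) := by
  have := vf.v_add x (-y)
  rwa [vf.v_neg y, ← sub_eq_add_neg] at this

lemma v_sub_nonneg {x y : K} (hx : 0 ≤ vf.v x) (hy : 0 ≤ vf.v y) : 0 ≤ vf.v (x - y) :=
  le_trans (le_min hx hy) (vf.v_sub_ge x y)

/-- ultrametric equality: if `v y < v x` then `v (x - y) = v y` -/
lemma v_sub_eq_right {x y : K} (h : vf.v y < vf.v x) : vf.v (x - y) = vf.v y := by
  have h1 : vf.v y ≤ vf.v (x - y) := le_trans (le_min (le_of_lt h) le_rfl) (vf.v_sub_ge x y)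
  have h2 : vf.v (x - y) ≤ vf.v y := by
    by_contra hc
    push_neg at hc
    have hy : y = x - (x - y) := by ring
    have hle := vf.v_sub_ge x (x - y)
    rw [← hy] at hle
    exact absurd hle (not_le.2 (lt_min h hc))
  exact le_antisymm h2 h1

lemma v_sub_eq_left {x y : K} (h : vf.v x < vf.v y) : vf.v (x - y) = vf.v x := by
  rw [← vf.v_neg (x - y), neg_sub, vf.v_sub_eq_right h]

lemma v_pow_nonneg {x : K} (hx : 0 ≤ vf.v x) (n : ℕ) : 0 ≤ vf.v (x ^ n) := by
  induction n with
  | zero => simp [vf.v_one]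
  | succ n ih => rw [pow_succ, vf.v_mul]; exact add_nonneg ih hx

lemma v_pow_zero {x : K} (hx : vf.v x = 0) (n : ℕ) : vf.v (x ^ n) = 0 := by
  induction n with
  | zero => simp [vf.v_one]
  | succ n ih => rw [pow_succ, vf.v_mul, ih, hx, add_zero]

lemma v_pow_pos {x : K} (hx : 0 < vf.v x) {n : ℕ} (hn : 1 ≤ n) : 0 < vf.v (x ^ n) := by
  obtain ⟨m, rfl⟩ := Nat.exists_eq_add_of_le hn
  rw [add_comm, pow_succ, vf.v_mul]
  calc (0 : WithTop Γ) < vf.v x := hx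
    _ = 0 + vf.v x := (zero_add _).symm
    _ ≤ vf.v (x ^ m) + vf.v x := add_le_add_left (vf.v_pow_nonneg (le_of_lt hx) m) _
end ValuedFieldAux

namespace Stmt4

variable {K : Type*} [Field K]

/-- evaluation of the additive polynomial with coefficients `a 0, …, a n` -/
def addEval (p : ℕ) (a : ℕ → K) (n : ℕ) (x : K) : K :=
  ∑ i ∈ Finset.range (n + 1), a i * x ^ p ^ i

/-- coefficients of the additive polynomial computed by `iterLin2 p L` -/
def compCoeff (p : ℕ) : List (K × K) → ℕ → K
  | [] => fun k => if k = 0 then 1 else 0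
  | ce :: rest => fun k =>
      (if k = 0 then 0 else compCoeff p rest (k - 1) * ce.1 ^ p ^ (k - 1)) -
        compCoeff p rest k * ce.2 ^ p ^ k

lemma compCoeff_eq_zero (p : ℕ) : ∀ (L : List (K × K)) (k : ℕ), L.length < k →
    compCoeff p L k = 0 := by
  intro L
  induction L with
  | nil => intro k hk; simp [compCoeff]; omega
  | cons ce rest ih =>
      intro k hk
      simp only [List.length_cons] at hk
      have h1 : compCoeff p rest (k - 1) = 0 := ih _ (by omega)
      have h2 : compCoeff p rest k = 0 := ih _ (by omega)
      simp [compCoeff, h1, h2]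

lemma iterLin2_eq_addEval (p : ℕ) [Fact p.Prime] [CharP K p] :
    ∀ (L : List (K × K)) (x : K),
      iterLin2 p L x = addEval p (compCoeff p L) L.length x := by
  intro L
  induction L with
  | nil => intro x; simp [iterLin2, addEval, compCoeff]
  | cons ce rest ih =>
      intro x
      obtain ⟨c, e⟩ := ce
      set n := rest.length with hn
      have key : ∀ y : K, addEval p (compCoeff p rest) n y =
          ∑ j ∈ Finset.range (n + 1), compCoeff p rest j * y ^ p ^ j := fun y => rfl
      show iterLin2 p rest (c * x ^ p - e * x) = _
      rw [ih]
      simp only [List.length_cons, addEval, compCoeff]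
      have hsub : ∀ j : ℕ, (c * x ^ p - e * x) ^ p ^ j
          = c ^ p ^ j * x ^ p ^ (j+1) - e ^ p ^ j * x ^ p ^ j := by
        intro j
        rw [sub_pow_char_pow, mul_pow, mul_pow, ← pow_mul, ← pow_succ']
      calc ∑ j ∈ Finset.range (n + 1), compCoeff p rest j * (c * x ^ p - e * x) ^ p ^ j
          = ∑ j ∈ Finset.range (n + 1), (compCoeff p rest j * c ^ p ^ j * x ^ p ^ (j+1)
              - compCoeff p rest j * e ^ p ^ j * x ^ p ^ j) := by
            refine Finset.sum_congr rfl fun j _ => ?_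
            rw [hsub j]; ring
        _ = ∑ j ∈ Finset.range (n + 1), compCoeff p rest j * c ^ p ^ j * x ^ p ^ (j+1)
              - ∑ j ∈ Finset.range (n + 1), compCoeff p rest j * e ^ p ^ j * x ^ p ^ j := by
            rw [Finset.sum_sub_distrib]
        _ = ∑ k ∈ Finset.range (n + 1 + 1),
              (if k = 0 then 0 else compCoeff p rest (k - 1) * c ^ p ^ (k - 1)) * x ^ p ^ k
              - ∑ k ∈ Finset.range (n + 1 + 1), compCoeff p rest k * e ^ p ^ k * x ^ p ^ k := by
            congr 1
            · rw [Finset.sum_range_succ' (fun k =>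
                (if k = 0 then 0 else compCoeff p rest (k - 1) * c ^ p ^ (k - 1)) * x ^ p ^ k)]
              simp
            · rw [Finset.sum_range_succ (fun k => compCoeff p rest k * e ^ p ^ k * x ^ p ^ k)
                (n + 1), compCoeff_eq_zero p rest (n + 1) (by omega)]
              simp
        _ = _ := by
            rw [← Finset.sum_sub_distrib]
            refine Finset.sum_congr rfl fun k _ => ?_
            ring

/-- one step of the division: absorb the top coefficient -/
def divNext (p : ℕ) (β : K) (m : ℕ) (a : ℕ → K) : ℕ → K :=
  Function.update a m (a m + a (m + 1) * β ^ p ^ m)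

/-- quotient of right division of `∑ a i x^{p^i}` (degree `n`) by `x^p - βx` -/
def divQ (p : ℕ) (β : K) : ℕ → (ℕ → K) → (ℕ → K)
  | 0, _ => fun _ => 0
  | n + 1, a => fun j => if j = n then a (n + 1) else divQ p β n (divNext p β n a) j

/-- remainder (a scalar, coefficient of `x`) of that division -/
def divR (p : ℕ) (β : K) : ℕ → (ℕ → K) → K
  | 0, a => a 0
  | n + 1, a => divR p β n (divNext p β n a)

lemma divQ_top (p : ℕ) (β : K) (n : ℕ) (a : ℕ → K) : divQ p β (n + 1) a n = a (n + 1) := by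
  simp [divQ]

lemma addEval_divNext (p : ℕ) [Fact p.Prime] [CharP K p] (β : K) (n : ℕ) (a : ℕ → K) (x : K) :
    addEval p a (n + 1) x
      = addEval p (divNext p β n a) n x + a (n + 1) * (x ^ p - β * x) ^ p ^ n := by
  have hpow : (x ^ p - β * x) ^ p ^ n = x ^ p ^ (n + 1) - β ^ p ^ n * x ^ p ^ n := by
    rw [sub_pow_char_pow, mul_pow, ← pow_mul, ← pow_succ']
  rw [hpow, addEval, addEval, Finset.sum_range_succ, Finset.sum_range_succ,
    Finset.sum_range_succ]
  have h1 : ∀ i ∈ Finset.range n, divNext p β n a i * x ^ p ^ i = a i * x ^ p ^ i := by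
    intro i hi
    rw [Finset.mem_range] at hi
    rw [divNext, Function.update_of_ne (by omega)]
  rw [Finset.sum_congr rfl h1]
  have h2 : divNext p β n a n = a n + a (n + 1) * β ^ p ^ n := by
    rw [divNext, Function.update_self]
  rw [h2]; ring

lemma divQ_divR_spec (p : ℕ) [Fact p.Prime] [CharP K p] (β : K) :
    ∀ (n : ℕ) (a : ℕ → K) (x : K),
      addEval p a (n + 1) x
        = addEval p (divQ p β (n + 1) a) n (x ^ p - β * x) + divR p β (n + 1) a * x := by
  intro n
  induction n with
  | zero =>
      intro a x
      have hq : divQ p β 1 a 0 = a 1 := divQ_top p β 0 a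
      have hr : divR p β 1 a = a 0 + a 1 * β ^ p ^ 0 := by
        simp [divR, divNext, Function.update_self]
      simp only [addEval, Finset.sum_range_succ, Finset.sum_range_zero, hq, hr]
      simp only [pow_zero, pow_one]
      ring
  | succ n ih =>
      intro a x
      rw [addEval_divNext p β (n + 1) a x, ih (divNext p β (n + 1) a) x]
      have hr : divR p β (n + 2) a = divR p β (n + 1) (divNext p β (n + 1) a) := rfl
      rw [← hr]
      have hq : addEval p (divQ p β (n + 2) a) (n + 1) (x ^ p - β * x)
          = addEval p (divQ p β (n + 1) (divNext p β (n + 1) a)) n (x ^ p - β * x)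
            + a (n + 2) * (x ^ p - β * x) ^ p ^ (n + 1) := by
        rw [addEval, addEval, Finset.sum_range_succ]
        congr 1
        · refine Finset.sum_congr rfl fun j hj => ?_
          rw [Finset.mem_range] at hj
          have : divQ p β (n + 2) a j = divQ p β (n + 1) (divNext p β (n + 1) a) j := by
            show (if j = n + 1 then a (n + 2) else _) = _
            rw [if_neg (by omega)]
          rw [this]
        · rw [divQ_top]
      rw [hq]; ring

open Polynomial in
lemma coeff_addPoly (p : ℕ) (hp : 2 ≤ p) (a : ℕ → K) (n k : ℕ) (hk : k ≤ n) :
    (∑ i ∈ Finset.range (n + 1), C (a i) * X ^ p ^ i).coeff (p ^ k) = a k := by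
  rw [Polynomial.finset_sum_coeff]
  have h : ∀ i ∈ Finset.range (n + 1),
      (C (a i) * X ^ p ^ i).coeff (p ^ k) = if i = k then a i else 0 := by
    intro i _
    rw [Polynomial.coeff_C_mul, Polynomial.coeff_X_pow]
    by_cases h : i = k
    · simp [h]
    · rw [if_neg (fun hc => h (Nat.pow_right_injective hp hc).symm), if_neg h, mul_zero]
  rw [Finset.sum_congr rfl h, Finset.sum_ite_eq' (Finset.range (n + 1)) k a,
    if_pos (Finset.mem_range.mpr (by omega))]

open Polynomial in
lemma addPoly_facts (p : ℕ) (hp : p.Prime) [CharP K p] (a : ℕ → K) (n : ℕ)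
    (h0 : a 0 ≠ 0) (htop : a n ≠ 0) :
    ∃ P : K[X], (∀ x, P.eval x = addEval p a n x) ∧ P.Separable ∧ P.natDegree = p ^ n := by
  classical
  refine ⟨∑ i ∈ Finset.range (n + 1), C (a i) * X ^ p ^ i, ?_, ?_, ?_⟩
  · intro x
    rw [Polynomial.eval_finset_sum]
    simp [addEval]
  · have hderiv : derivative (∑ i ∈ Finset.range (n + 1), C (a i) * X ^ p ^ i) = C (a 0) := by
      rw [map_sum, Finset.sum_range_succ' (fun i => derivative (C (a i) * X ^ p ^ i))]
      have hz : ∀ i ∈ Finset.range n,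
          derivative (C (a (i + 1)) * X ^ p ^ (i + 1)) = 0 := by
        intro i _
        rw [derivative_C_mul_X_pow]
        have hc : ((p ^ (i + 1) : ℕ) : K) = 0 := by
          rw [Nat.cast_pow, CharP.cast_eq_zero K p, zero_pow (by omega)]
        simp [hc]
      rw [Finset.sum_congr rfl hz, Finset.sum_const, smul_zero, zero_add,
        derivative_C_mul_X_pow]
      norm_num
    refine ⟨0, C (a 0)⁻¹, ?_⟩
    rw [hderiv, zero_mul, zero_add, ← C_mul, inv_mul_cancel₀ h0, C_1]
  · have hne : (∑ i ∈ Finset.range (n + 1), C (a i) * X ^ p ^ i).coeff (p ^ n) ≠ 0 := by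
      rw [coeff_addPoly p hp.two_le a n n le_rfl]; exact htop
    refine le_antisymm ?_ (Polynomial.le_natDegree_of_ne_zero hne)
    refine Polynomial.natDegree_sum_le_of_forall_le _ _ fun i hi => ?_
    refine le_trans (Polynomial.natDegree_mul_le) ?_
    rw [Polynomial.natDegree_C, Polynomial.natDegree_X_pow, zero_add]
    exact Nat.pow_le_pow_right hp.pos (by simpa [Nat.lt_succ_iff] using hi)

open Polynomial in
lemma exists_nonzero_root (p : ℕ) (hp : p.Prime) [CharP K p] [IsSepClosed K]
    (a : ℕ → K) (n : ℕ) (hn : 1 ≤ n) (h0 : a 0 ≠ 0) (htop : a n ≠ 0) :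
    ∃ α : K, α ≠ 0 ∧ addEval p a n α = 0 := by
  classical
  obtain ⟨P, heval, hsep, hdeg⟩ := addPoly_facts p hp a n h0 htop
  have hP0 : P ≠ 0 := by
    intro h
    rw [h, Polynomial.natDegree_zero] at hdeg
    have := pow_pos hp.pos n
    omega
  have hsplit : (P.map (algebraMap K K)).Splits := IsSepClosed.splits_codomain P hsep
  have hcard : Fintype.card (P.rootSet K) = p ^ n := by
    rw [Polynomial.card_rootSet_eq_natDegree hsep hsplit, hdeg]
  have h2 : 1 < Fintype.card (P.rootSet K) := by
    rw [hcard]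
    calc 1 < p := hp.one_lt
      _ = p ^ 1 := (pow_one p).symm
      _ ≤ p ^ n := Nat.pow_le_pow_right hp.pos hn
  obtain ⟨⟨x, hx⟩, ⟨y, hy⟩, hxy⟩ := Fintype.exists_pair_of_one_lt_card h2
  have hroot : ∀ z : K, z ∈ P.rootSet K → addEval p a n z = 0 := by
    intro z hz
    rw [Polynomial.mem_rootSet] at hz
    have := hz.2
    rwa [Polynomial.aeval_def, Algebra.algebraMap_self, ← Polynomial.eval_map,
      Polynomial.map_id, heval] at this
  by_cases hx0 : x = 0
  · refine ⟨y, ?_, hroot y hy⟩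
    intro h0'
    exact hxy (by simp [Subtype.ext_iff, hx0, h0'])
  · exact ⟨x, hx0, hroot x hx⟩

open Polynomial in
lemma infinite_of_sepClosed (p : ℕ) (hp : p.Prime) [CharP K p] [IsSepClosed K] :
    Infinite K := by
  classical
  by_contra hfin
  rw [not_infinite_iff_finite] at hfin
  haveI := Fintype.ofFinite K
  set n := Fintype.card K + 1 with hn
  set b : ℕ → K := fun i => if i = 0 then -1 else if i = n then 1 else 0 with hb
  have h0 : b 0 ≠ 0 := by simp [hb]
  have htop : b n ≠ 0 := by simp [hb, hn]
  obtain ⟨P, heval, hsep, hdeg⟩ := addPoly_facts p hp b n h0 htop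
  have hP0 : P ≠ 0 := by
    intro h
    rw [h, Polynomial.natDegree_zero] at hdeg
    have := pow_pos hp.pos n
    omega
  have hsplit : (P.map (algebraMap K K)).Splits := IsSepClosed.splits_codomain P hsep
  have hcard : Fintype.card (P.rootSet K) = p ^ n := by
    rw [Polynomial.card_rootSet_eq_natDegree hsep hsplit, hdeg]
  have hle : Fintype.card (P.rootSet K) ≤ Fintype.card K :=
    Fintype.card_le_of_injective _ Subtype.val_injective
  rw [hcard] at hle
  have : n < p ^ n := Nat.lt_pow_self hp.one_lt
  omega

open Polynomial in
lemma addEval_coeff_ident (p : ℕ) (hp : p.Prime) [CharP K p] [IsSepClosed K]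
    (n : ℕ) (b c : ℕ → K) (h : ∀ x : K, addEval p b n x = addEval p c n x) :
    ∀ k ≤ n, b k = c k := by
  classical
  haveI : Infinite K := infinite_of_sepClosed p hp
  intro k hk
  have hP : (∑ i ∈ Finset.range (n + 1), C (b i) * X ^ p ^ i)
      = (∑ i ∈ Finset.range (n + 1), C (c i) * X ^ p ^ i) := by
    apply Polynomial.funext
    intro x
    rw [Polynomial.eval_finset_sum, Polynomial.eval_finset_sum]
    simpa [addEval] using h x
  have h2 := congrArg (fun P => Polynomial.coeff P (p ^ k)) hP
  rwa [coeff_addPoly p hp.two_le b n k hk, coeff_addPoly p hp.two_le c n k hk] at h2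

lemma iterLin2_append (p : ℕ) :
    ∀ (L1 L2 : List (K × K)) (x : K), iterLin2 p (L1 ++ L2) x = iterLin2 p L2 (iterLin2 p L1 x) := by
  intro L1
  induction L1 with
  | nil => intro L2 x; rfl
  | cons ce rest ih =>
      intro L2 x
      show iterLin2 p (rest ++ L2) (ce.1 * x ^ p - ce.2 * x) = _
      rw [ih]
      rfl

lemma fieldFactor (p : ℕ) (hp : p.Prime) [Fact p.Prime] [CharP K p] [IsSepClosed K] :
    ∀ n : ℕ, 1 ≤ n → ∀ a : ℕ → K, a n ≠ 0 →
      ∃ L : List (K × K), L.length = n ∧ (∀ ce ∈ L, ce.1 ≠ 0) ∧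
        ∀ x : K, addEval p a n x = iterLin2 p L x := by
  intro n
  induction n using Nat.strong_induction_on with
  | _ n ih =>
    intro hn a htop
    match n, hn, htop with
    | 1, _, htop =>
        refine ⟨[(a 1, -(a 0))], rfl, ?_, ?_⟩
        · intro ce hce
          simp only [List.mem_singleton] at hce
          rw [hce]
          exact htop
        · intro x
          show addEval p a 1 x = iterLin2 p [] _
          simp only [addEval, Finset.sum_range_succ, Finset.sum_range_zero, iterLin2, id]
          simp only [pow_zero, pow_one]
          ring
    | (m + 2), _, htop =>
        by_cases h0 : a 0 = 0
        · set b : ℕ → K := fun i => a (i + 1) with hb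
          obtain ⟨L', hlen, hc, heq⟩ := ih (m + 1) (by omega) (by omega) b htop
          refine ⟨(1, 0) :: L', by simp [hlen], ?_, ?_⟩
          · intro ce hce
            rcases List.mem_cons.mp hce with h | h
            · rw [h]; exact one_ne_zero
            · exact hc ce h
          · intro x
            show addEval p a (m + 2) x = iterLin2 p L' (1 * x ^ p - 0 * x)
            rw [one_mul, zero_mul, sub_zero, ← heq (x ^ p)]
            rw [addEval, addEval, Finset.sum_range_succ' (fun i => a i * x ^ p ^ i)]
            rw [h0, zero_mul, add_zero]
            refine Finset.sum_congr rfl fun i _ => ?_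
            rw [hb, ← pow_mul, ← pow_succ']
        · obtain ⟨α, hα0, hαroot⟩ := exists_nonzero_root p hp a (m + 2) (by omega) h0 htop
          set β : K := α ^ (p - 1) with hβ
          have hspec : ∀ x : K, addEval p a (m + 2) x
              = addEval p (divQ p β (m + 2) a) (m + 1) (x ^ p - β * x)
                + divR p β (m + 2) a * x := divQ_divR_spec p β (m + 1) a
          have hαp : α ^ p - β * α = 0 := by
            rw [hβ, ← pow_succ]
            have h1 : p - 1 + 1 = p := by have := hp.pos; omega
            rw [h1, sub_self]
          have hzero : addEval p (divQ p β (m + 2) a) (m + 1) (0 : K) = 0 := by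
            rw [addEval]
            refine Finset.sum_eq_zero fun j _ => ?_
            rw [zero_pow (pow_ne_zero j hp.pos.ne'), mul_zero]
          have hr0 : divR p β (m + 2) a = 0 := by
            have h1 := hspec α
            rw [hαroot, hαp, hzero, zero_add] at h1
            exact (mul_eq_zero.mp h1.symm).resolve_right hα0
          have hkey : ∀ x : K, addEval p a (m + 2) x
              = addEval p (divQ p β (m + 2) a) (m + 1) (x ^ p - β * x) := by
            intro x
            rw [hspec x, hr0, zero_mul, add_zero]
          have hqtop : divQ p β (m + 2) a (m + 1) = a (m + 2) := divQ_top p β (m + 1) a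
          obtain ⟨L', hlen, hc, heq⟩ := ih (m + 1) (by omega) (by omega) (divQ p β (m + 2) a)
            (by rw [hqtop]; exact htop)
          refine ⟨(1, β) :: L', by simp [hlen], ?_, ?_⟩
          · intro ce hce
            rcases List.mem_cons.mp hce with h | h
            · rw [h]; exact one_ne_zero
            · exact hc ce h
          · intro x
            show addEval p a (m + 2) x = iterLin2 p L' (1 * x ^ p - β * x)
            rw [one_mul, ← heq (x ^ p - β * x), hkey x]

section Valued

variable {Γ : Type*} [AddCommGroup Γ] [LinearOrder Γ] [IsOrderedAddMonoid Γ] (vf : ValuedFieldAux K Γ)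

lemma wt_pos_add_nonneg {a b : WithTop Γ} (ha : 0 < a) (hb : 0 ≤ b) : 0 < a + b :=
  lt_of_lt_of_le ha (le_add_of_nonneg_right hb)

lemma wt_nonneg_add_pos {a b : WithTop Γ} (ha : 0 ≤ a) (hb : 0 < b) : 0 < a + b :=
  lt_of_lt_of_le hb (le_add_of_nonneg_left ha)

lemma normalize (p : ℕ) :
    ∀ L : List (K × K), (∀ ce ∈ L, ce.1 ≠ 0) → ∀ μ : K, μ ≠ 0 →
      ∃ (L' : List (K × K)) (lam : K), lam ≠ 0 ∧ L'.length = L.length ∧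
        (∀ ce ∈ L', (0 ≤ vf.v ce.1 ∧ 0 ≤ vf.v ce.2 ∧ min (vf.v ce.1) (vf.v ce.2) = 0)
          ∧ ce.1 ≠ 0) ∧
        ∀ x : K, iterLin2 p L' (μ * x) = lam * iterLin2 p L x := by
  intro L
  induction L with
  | nil =>
      intro _ μ hμ
      exact ⟨[], μ, hμ, rfl, by simp, fun x => rfl⟩
  | cons ce rest ih =>
      intro hc μ hμ
      obtain ⟨c, e⟩ := ce
      have hc0 : c ≠ 0 := hc (c, e) (List.mem_cons_self)
      set u : K := c * (μ⁻¹) ^ p with hu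
      set w : K := e * μ⁻¹ with hw
      have hu0 : u ≠ 0 := mul_ne_zero hc0 (pow_ne_zero _ (inv_ne_zero hμ))
      have hmin_ne : min (vf.v u) (vf.v w) ≠ ⊤ :=
        fun h => vf.v_ne_top hu0 (eq_top_iff.2 (h ▸ min_le_left (vf.v u) (vf.v w)))
      obtain ⟨g, hg⟩ := WithTop.ne_top_iff_exists.1 hmin_ne
      obtain ⟨lam1, hlam1⟩ := vf.v_surj (-g)
      have hlam1_ne : lam1 ≠ 0 := by
        intro h
        rw [h, vf.v_zero] at hlam1
        exact WithTop.coe_ne_top hlam1.symm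
      set c' : K := lam1 * u with hc'
      set e' : K := lam1 * w with he'
      have hvc' : vf.v c' = ((-g : Γ) : WithTop Γ) + vf.v u := by rw [hc', vf.v_mul, hlam1]
      have hve' : vf.v e' = ((-g : Γ) : WithTop Γ) + vf.v w := by rw [he', vf.v_mul, hlam1]
      have hcond : 0 ≤ vf.v c' ∧ 0 ≤ vf.v e' ∧ min (vf.v c') (vf.v e') = 0 := by
        have hgu : ((g : Γ) : WithTop Γ) ≤ vf.v u := hg ▸ min_le_left _ _
        have hgw : ((g : Γ) : WithTop Γ) ≤ vf.v w := hg ▸ min_le_right _ _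
        have hzero : ((-g : Γ) : WithTop Γ) + ((g : Γ) : WithTop Γ) = 0 := by
          rw [← WithTop.coe_add, neg_add_cancel, WithTop.coe_zero]
        have h1 : 0 ≤ vf.v c' := by
          rw [hvc', ← hzero]
          exact add_le_add_right hgu _
        have h2 : 0 ≤ vf.v e' := by
          rw [hve', ← hzero]
          exact add_le_add_right hgw _
        refine ⟨h1, h2, ?_⟩
        rcases min_choice (vf.v u) (vf.v w) with hm | hm
        · have : vf.v c' = 0 := by rw [hvc', ← hm, ← hg, ← WithTop.coe_add, neg_add_cancel,
            WithTop.coe_zero]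
          rw [min_eq_left (this ▸ h2 : vf.v c' ≤ vf.v e')] at *
          exact this
        · have : vf.v e' = 0 := by rw [hve', ← hm, ← hg, ← WithTop.coe_add, neg_add_cancel,
            WithTop.coe_zero]
          rw [min_eq_right (this ▸ h1 : vf.v e' ≤ vf.v c')] at *
          exact this
      obtain ⟨rest', lam, hlam_ne, hlen, hmem, hspec⟩ :=
        ih (fun b hb => hc b (List.mem_cons_of_mem _ hb)) lam1 hlam1_ne
      refine ⟨(c', e') :: rest', lam, hlam_ne, by simp [hlen], ?_, ?_⟩
      · intro b hb
        rcases List.mem_cons.mp hb with h | h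
        · rw [h]
          exact ⟨hcond, mul_ne_zero hlam1_ne hu0⟩
        · exact hmem b h
      · intro x
        show iterLin2 p rest' (c' * (μ * x) ^ p - e' * (μ * x)) = lam * _
        have hkey : c' * (μ * x) ^ p - e' * (μ * x) = lam1 * (c * x ^ p - e * x) := by
          rw [hc', he', hu, hw, mul_pow]
          field_simp
          rw [mul_assoc c, ← mul_pow, one_div_mul_cancel hμ, one_pow, mul_one]
        rw [hkey, hspec (c * x ^ p - e * x)]
        rfl

lemma gauss (p : ℕ) (hp : p.Prime) :
    ∀ L : List (K × K),
      (∀ ce ∈ L, 0 ≤ vf.v ce.1 ∧ 0 ≤ vf.v ce.2 ∧ min (vf.v ce.1) (vf.v ce.2) = 0) →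
      (∀ k, 0 ≤ vf.v (compCoeff p L k)) ∧
        ∃ k, vf.v (compCoeff p L k) = 0 ∧ ∀ j < k, 0 < vf.v (compCoeff p L j) := by
  intro L
  induction L with
  | nil =>
      intro _
      constructor
      · intro k
        by_cases h : k = 0
        · simp [compCoeff, h, vf.v_one]
        · simp [compCoeff, h, vf.v_zero]
      · exact ⟨0, by simp [compCoeff, vf.v_one], fun j hj => absurd hj (Nat.not_lt_zero j)⟩
  | cons ce rest ih =>
      intro hmem
      obtain ⟨c, e⟩ := ce
      obtain ⟨hcnn, henn, hmin⟩ := hmem (c, e) (List.mem_cons_self)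
      obtain ⟨hAnn, k0, hk0, hbelow⟩ := ih (fun b hb => hmem b (List.mem_cons_of_mem _ hb))
      have hB : ∀ k, compCoeff p ((c, e) :: rest) k =
          (if k = 0 then 0 else compCoeff p rest (k - 1) * c ^ p ^ (k - 1)) -
            compCoeff p rest k * e ^ p ^ k := fun k => rfl
      have htop_pos : (0 : WithTop Γ) < ⊤ := by
        rw [← vf.v_one]
        exact lt_of_le_of_ne le_top (vf.v_ne_top one_ne_zero)
      have hT1nn : ∀ k, 0 ≤ vf.v (if k = 0 then 0 else
          compCoeff p rest (k - 1) * c ^ p ^ (k - 1)) := by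
        intro k
        by_cases h : k = 0
        · rw [if_pos h, vf.v_zero]; exact le_top
        · rw [if_neg h, vf.v_mul]
          exact add_nonneg (hAnn _) (vf.v_pow_nonneg hcnn _)
      have hnn : ∀ k, 0 ≤ vf.v (compCoeff p ((c, e) :: rest) k) := by
        intro k
        rw [hB k]
        refine vf.v_sub_nonneg (hT1nn k) ?_
        rw [vf.v_mul]
        exact add_nonneg (hAnn _) (vf.v_pow_nonneg henn _)
      refine ⟨hnn, ?_⟩
      by_cases he : vf.v e = 0
      · refine ⟨k0, ?_, ?_⟩
        · have hT2 : vf.v (compCoeff p rest k0 * e ^ p ^ k0) = 0 := by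
            rw [vf.v_mul, hk0, vf.v_pow_zero he, add_zero]
          rw [hB k0]
          by_cases h : k0 = 0
          · rw [if_pos h, zero_sub, vf.v_neg, hT2]
          · rw [if_neg h]
            have hT1 : 0 < vf.v (compCoeff p rest (k0 - 1) * c ^ p ^ (k0 - 1)) := by
              rw [vf.v_mul]
              exact wt_pos_add_nonneg (hbelow (k0 - 1) (by omega)) (vf.v_pow_nonneg hcnn _)
            rw [vf.v_sub_eq_right (hT2 ▸ hT1), hT2]
        · intro j hj
          rw [hB j]
          refine lt_of_lt_of_le (lt_min ?_ ?_) (vf.v_sub_ge _ _)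
          · by_cases h : j = 0
            · rw [if_pos h, vf.v_zero]; exact htop_pos
            · rw [if_neg h, vf.v_mul]
              exact wt_pos_add_nonneg (hbelow (j - 1) (by omega)) (vf.v_pow_nonneg hcnn _)
          · rw [vf.v_mul]
            exact wt_pos_add_nonneg (hbelow j hj) (vf.v_pow_nonneg henn _)
      · have hcz : vf.v c = 0 := by
          rcases min_choice (vf.v c) (vf.v e) with hm | hm
          · rw [hmin] at hm; exact hm.symm
          · rw [hmin] at hm; exact absurd hm.symm he
        have hepos : 0 < vf.v e := lt_of_le_of_ne henn (Ne.symm he)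
        refine ⟨k0 + 1, ?_, ?_⟩
        · rw [hB (k0 + 1), if_neg (Nat.succ_ne_zero k0), Nat.add_sub_cancel]
          have hT1 : vf.v (compCoeff p rest k0 * c ^ p ^ k0) = 0 := by
            rw [vf.v_mul, hk0, vf.v_pow_zero hcz, add_zero]
          have hT2 : 0 < vf.v (compCoeff p rest (k0 + 1) * e ^ p ^ (k0 + 1)) := by
            rw [vf.v_mul]
            exact wt_nonneg_add_pos (hAnn _)
              (vf.v_pow_pos hepos (Nat.one_le_pow _ _ hp.pos))
          rw [vf.v_sub_eq_left (hT1 ▸ hT2), hT1]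
        · intro j hj
          rw [hB j]
          refine lt_of_lt_of_le (lt_min ?_ ?_) (vf.v_sub_ge _ _)
          · by_cases h : j = 0
            · rw [if_pos h, vf.v_zero]; exact htop_pos
            · rw [if_neg h, vf.v_mul]
              exact wt_pos_add_nonneg (hbelow (j - 1) (by omega)) (vf.v_pow_nonneg hcnn _)
          · rw [vf.v_mul]
            exact wt_nonneg_add_pos (hAnn j)
              (vf.v_pow_pos hepos (Nat.one_le_pow _ _ hp.pos))

end Valued


end Stmt4




/-- Let `(K, v)` be a separably closed valued field of characteristic
`p > 0` with valuation ring `O`. Given `a_0, …, a_d ∈ O` with `a_d ≠ 0` and at least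
one `a_i` a unit, there are `c_j, e_j ∈ O` with `min(v c_j, v e_j) = 0` such that
`∑ a_i·x^{p^i} = (L_d ∘ ⋯ ∘ L_1)(x)` where `L_j(y) = c_j·y^p − e_j·y`. -/
theorem stmt_4 (p : ℕ) (hp : p.Prime) (K : Type*) [Field K] [CharP K p] [IsSepClosed K]
    (Γ : Type*) [AddCommGroup Γ] [LinearOrder Γ] [IsOrderedAddMonoid Γ] (vf : ValuedFieldAux K Γ)
    (d : ℕ) (hd : 1 ≤ d) (a : ℕ → K)
    (ha : ∀ i ≤ d, 0 ≤ vf.v (a i)) (had : a d ≠ 0)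
    (haunit : ∃ i ≤ d, vf.v (a i) = 0) :
    ∃ L : List (K × K), L.length = d ∧
      (∀ ce ∈ L, 0 ≤ vf.v ce.1 ∧ 0 ≤ vf.v ce.2 ∧ min (vf.v ce.1) (vf.v ce.2) = 0) ∧
      ∀ x : K, ∑ i ∈ Finset.range (d + 1), a i * x ^ (p ^ i) = iterLin2 p L x := by
  haveI : Fact p.Prime := ⟨hp⟩
  obtain ⟨L0, hlen0, hc0, heq0⟩ := Stmt4.fieldFactor p hp d hd a had
  obtain ⟨L1, lam, hlam_ne, hlen1, hmem1, hspec1⟩ :=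
    Stmt4.normalize vf p L0 hc0 1 one_ne_zero
  have hlen1d : L1.length = d := hlen1.trans hlen0
  have heq1 : ∀ x : K, iterLin2 p L1 x = lam * Stmt4.addEval p a d x := by
    intro x
    have h := hspec1 x
    rw [one_mul] at h
    rw [h, ← heq0 x]
  have hcoeff : ∀ k ≤ d, Stmt4.compCoeff p L1 k = lam * a k := by
    refine Stmt4.addEval_coeff_ident p hp d _ _ fun x => ?_
    have h1 : Stmt4.addEval p (Stmt4.compCoeff p L1) d x = iterLin2 p L1 x := by
      rw [Stmt4.iterLin2_eq_addEval p L1 x, hlen1d]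
    rw [h1, heq1 x, Stmt4.addEval, Stmt4.addEval, Finset.mul_sum]
    exact Finset.sum_congr rfl fun i _ => (mul_assoc _ _ _).symm
  obtain ⟨hnn, k, hk, _⟩ := Stmt4.gauss vf p hp L1 (fun ce hce => (hmem1 ce hce).1)
  have hkd : k ≤ d := by
    by_contra hcon
    rw [Stmt4.compCoeff_eq_zero p L1 k (by omega), vf.v_zero] at hk
    exact (by simp : (⊤ : WithTop Γ) ≠ 0) hk
  have hvlam_nonneg : 0 ≤ vf.v lam := by
    obtain ⟨i0, hi0d, hi0⟩ := haunit
    have := hnn i0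
    rwa [hcoeff i0 hi0d, vf.v_mul, hi0, add_zero] at this
  have hvlam : vf.v lam = 0 := by
    rw [hcoeff k hkd, vf.v_mul] at hk
    have h1 : vf.v lam ≤ vf.v lam + vf.v (a k) := le_add_of_nonneg_right (ha k hkd)
    rw [hk] at h1
    exact le_antisymm h1 hvlam_nonneg
  have hvlaminv : vf.v lam⁻¹ = 0 := by
    have h := vf.v_mul lam lam⁻¹
    rw [mul_inv_cancel₀ hlam_ne, vf.v_one, hvlam, zero_add] at h
    exact h.symm
  have hlaminv_ne : lam⁻¹ ≠ 0 := inv_ne_zero hlam_ne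
  obtain hnil | ⟨M, ce, hL1eq⟩ := L1.eq_nil_or_concat'
  · rw [hnil] at hlen1d; simp at hlen1d; omega
  refine ⟨M ++ [(lam⁻¹ * ce.1, lam⁻¹ * ce.2)], ?_, ?_, ?_⟩
  · have := hlen1d
    rw [hL1eq] at this
    simpa using this
  · intro b hb
    rcases List.mem_append.mp hb with h | h
    · exact (hmem1 b (by rw [hL1eq]; exact List.mem_append_left _ h)).1
    · have hce : ce ∈ L1 := by rw [hL1eq]; exact List.mem_append_right _ (List.mem_singleton.mpr rfl)
      obtain ⟨⟨hc1, hc2, hc3⟩, _⟩ := hmem1 ce hce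
      rw [List.mem_singleton.mp h]
      have hv1 : vf.v (lam⁻¹ * ce.1) = vf.v ce.1 := by rw [vf.v_mul, hvlaminv, zero_add]
      have hv2 : vf.v (lam⁻¹ * ce.2) = vf.v ce.2 := by rw [vf.v_mul, hvlaminv, zero_add]
      exact ⟨by rw [hv1]; exact hc1, by rw [hv2]; exact hc2, by rw [hv1, hv2]; exact hc3⟩
  · intro x
    have hfin : iterLin2 p (M ++ [(lam⁻¹ * ce.1, lam⁻¹ * ce.2)]) x
        = lam⁻¹ * iterLin2 p L1 x := by
      rw [Stmt4.iterLin2_append, hL1eq, Stmt4.iterLin2_append]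
      show lam⁻¹ * ce.1 * (iterLin2 p M x) ^ p - lam⁻¹ * ce.2 * (iterLin2 p M x)
        = lam⁻¹ * iterLin2 p [ce] (iterLin2 p M x)
      show _ = lam⁻¹ * (ce.1 * (iterLin2 p M x) ^ p - ce.2 * (iterLin2 p M x))
      ring
    rw [hfin, heq1 x, ← mul_assoc, inv_mul_cancel₀ hlam_ne, one_mul]
    rfl
end

section
/- Let (K, v) be a separably closed valued field of characteristic p > 0 with valuation ring O. Let a_0, …, a_d ∈ O with a_0 ≠ 0 and with at least one a_i a unit of O. Then for every n ∈ O there exists m ∈ O with ∑_{i=0}^{d} a_i·m^{p^i} = n; moreover, if v(n) = 0, then m can be chosen with v(m) = 0. -/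
namespace ValuedFieldAuxAux

variable {K : Type*} [Field K] {Γ : Type*} [AddCommGroup Γ] [LinearOrder Γ] [IsOrderedAddMonoid Γ]
  (vf : ValuedFieldAux K Γ)

lemma v_zero : vf.v 0 = ⊤ := (vf.v_eq_top_iff 0).2 rfl

lemma v_ne_top {x : K} (hx : x ≠ 0) : vf.v x ≠ ⊤ :=
  fun h => hx ((vf.v_eq_top_iff x).1 h)

lemma v_one : vf.v 1 = 0 := by
  have h := vf.v_mul 1 1
  rw [one_mul] at h
  lift vf.v 1 to Γ using v_ne_top vf one_ne_zero with γ hγ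
  rw [← WithTop.coe_add, WithTop.coe_eq_coe] at h
  have hγ0 : γ = 0 := by
    have h2 : γ + 0 = γ + γ := by rw [add_zero]; exact h
    exact (add_left_cancel h2).symm
  rw [hγ0, WithTop.coe_zero]

lemma v_neg_one : vf.v (-1) = 0 := by
  have h := vf.v_mul (-1) (-1)
  rw [neg_mul_neg, one_mul, v_one] at h
  lift vf.v (-1) to Γ using v_ne_top vf (by norm_num) with γ hγ
  rw [← WithTop.coe_add, show (0 : WithTop Γ) = ((0 : Γ) : WithTop Γ) from rfl,
    WithTop.coe_eq_coe] at h
  rw [show (0 : WithTop Γ) = ((0 : Γ) : WithTop Γ) from rfl, WithTop.coe_eq_coe]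
  rcases lt_trichotomy γ 0 with h1 | h1 | h1
  · exact absurd h.symm (ne_of_lt (add_neg h1 h1))
  · exact h1
  · exact absurd h.symm (ne_of_gt (add_pos h1 h1))

lemma v_neg (x : K) : vf.v (-x) = vf.v x := by
  rw [show -x = -1 * x by ring, vf.v_mul, v_neg_one, zero_add]

lemma v_pow (x : K) (k : ℕ) : vf.v (x ^ k) = k • vf.v x := by
  induction k with
  | zero => simp [v_one]
  | succ k ih => rw [pow_succ, vf.v_mul, ih, succ_nsmul]

lemma v_finsum_ge {ι : Type*} (s : Finset ι) (f : ι → K) {c : WithTop Γ}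
    (h : ∀ j ∈ s, c ≤ vf.v (f j)) : c ≤ vf.v (∑ j ∈ s, f j) := by
  refine Finset.sum_induction f (fun x => c ≤ vf.v x) (fun x y hx hy => ?_) ?_ h
  · exact le_trans (le_min hx hy) (vf.v_add x y)
  · show c ≤ vf.v 0
    rw [v_zero]; exact le_top

lemma v_msum_ge (s : Multiset K) {c : WithTop Γ}
    (h : ∀ x ∈ s, c ≤ vf.v x) : c ≤ vf.v s.sum := by
  induction s using Multiset.induction with
  | empty => rw [Multiset.sum_zero, v_zero]; exact le_top
  | cons a s ih =>
      rw [Multiset.sum_cons]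
      refine le_trans (le_min (h a (Multiset.mem_cons_self a s)) ?_) (vf.v_add _ _)
      exact ih fun x hx => h x (Multiset.mem_cons_of_mem hx)

lemma v_mprod (s : Multiset K) : vf.v s.prod = (s.map vf.v).sum := by
  induction s using Multiset.induction with
  | empty => simp [v_one]
  | cons a s ih => rw [Multiset.prod_cons, vf.v_mul, Multiset.map_cons, Multiset.sum_cons, ih]

lemma exists_min_image (s : Multiset K) (hs : s ≠ 0) :
    ∃ x ∈ s, ∀ y ∈ s, vf.v x ≤ vf.v y := by
  induction s using Multiset.induction with
  | empty => exact absurd rfl hs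
  | cons a s ih =>
      rcases eq_or_ne s 0 with rfl | hs'
      · exact ⟨a, Multiset.mem_cons_self a 0, by simp⟩
      · obtain ⟨x, hx, hmin⟩ := ih hs'
        rcases le_total (vf.v a) (vf.v x) with h | h
        · refine ⟨a, Multiset.mem_cons_self a s, fun y hy => ?_⟩
          rcases Multiset.mem_cons.1 hy with rfl | hy
          · exact le_rfl
          · exact le_trans h (hmin y hy)
        · refine ⟨x, Multiset.mem_cons_of_mem hx, fun y hy => ?_⟩
          rcases Multiset.mem_cons.1 hy with rfl | hy
          · exact h
          · exact hmin y hy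

lemma exists_max_image (s : Multiset K) (hs : s ≠ 0) :
    ∃ x ∈ s, ∀ y ∈ s, vf.v y ≤ vf.v x := by
  induction s using Multiset.induction with
  | empty => exact absurd rfl hs
  | cons a s ih =>
      rcases eq_or_ne s 0 with rfl | hs'
      · exact ⟨a, Multiset.mem_cons_self a 0, by simp⟩
      · obtain ⟨x, hx, hmax⟩ := ih hs'
        rcases le_total (vf.v x) (vf.v a) with h | h
        · refine ⟨a, Multiset.mem_cons_self a s, fun y hy => ?_⟩
          rcases Multiset.mem_cons.1 hy with rfl | hy
          · exact le_rfl
          · exact le_trans (hmax y hy) h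
        · refine ⟨x, Multiset.mem_cons_of_mem hx, fun y hy => ?_⟩
          rcases Multiset.mem_cons.1 hy with rfl | hy
          · exact h
          · exact hmax y hy

lemma msum_le_card_nsmul (s : Multiset (WithTop Γ)) (M : WithTop Γ)
    (h : ∀ x ∈ s, x ≤ M) : s.sum ≤ Multiset.card s • M := by
  induction s using Multiset.induction with
  | empty => simp
  | cons a s ih =>
      rw [Multiset.sum_cons, Multiset.card_cons, succ_nsmul']
      exact add_le_add (h a (Multiset.mem_cons_self a s))
        (ih fun x hx => h x (Multiset.mem_cons_of_mem hx))

end ValuedFieldAuxAux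

open ValuedFieldAuxAux Polynomial in
/-- Let `(K, v)` be a separably closed valued field of characteristic
`p > 0` with valuation ring `O`. Let `a_0, …, a_d ∈ O` with `a_0 ≠ 0` and at least one
`a_i` a unit. Then for every `n ∈ O` there is `m ∈ O` with `∑ a_i·m^{p^i} = n`;
moreover if `v n = 0` then `m` can be chosen with `v m = 0`. -/
theorem stmt_5 (p : ℕ) (hp : p.Prime) (K : Type*) [Field K] [CharP K p] [IsSepClosed K]
    (Γ : Type*) [AddCommGroup Γ] [LinearOrder Γ] [IsOrderedAddMonoid Γ] (vf : ValuedFieldAux K Γ)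
    (d : ℕ) (a : ℕ → K)
    (ha : ∀ i ≤ d, 0 ≤ vf.v (a i)) (ha0 : a 0 ≠ 0)
    (haunit : ∃ i ≤ d, vf.v (a i) = 0) :
    ∀ n : K, 0 ≤ vf.v n →
      (∃ m : K, 0 ≤ vf.v m ∧ ∑ i ∈ Finset.range (d + 1), a i * m ^ (p ^ i) = n) ∧
      (vf.v n = 0 →
        ∃ m : K, vf.v m = 0 ∧ ∑ i ∈ Finset.range (d + 1), a i * m ^ (p ^ i) = n) := by
  classical
  intro n hn
  obtain ⟨i, hid, hai⟩ := haunit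
  have hppos : ∀ j : ℕ, 0 < p ^ j := fun j => Nat.pow_pos (n := j) hp.pos
  suffices H : ∃ m : K, 0 ≤ vf.v m ∧ ∑ j ∈ Finset.range (d + 1), a j * m ^ (p ^ j) = n by
    refine ⟨H, fun hn0 => ?_⟩
    obtain ⟨m, hm, hsum⟩ := H
    refine ⟨m, ?_, hsum⟩
    rcases hm.lt_or_eq with hlt | heq
    · -- v m > 0 leads to v n > 0, contradiction
      exfalso
      have hterm : ∀ j ∈ Finset.range (d + 1), vf.v m ≤ vf.v (a j * m ^ (p ^ j)) := by
        intro j hj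
        rw [vf.v_mul, v_pow]
        calc vf.v m = 0 + vf.v m := (zero_add _).symm
          _ ≤ vf.v (a j) + p ^ j • vf.v m := by
              refine add_le_add (ha j (by have := Finset.mem_range.1 hj; omega)) ?_
              calc vf.v m = 1 • vf.v m := (one_nsmul _).symm
                _ ≤ p ^ j • vf.v m := nsmul_le_nsmul_left hm (hppos j)
      have := v_finsum_ge vf _ _ hterm
      rw [hsum, hn0] at this
      exact absurd (lt_of_lt_of_le hlt this) (lt_irrefl 0)
    · exact heq.symm
  rcases eq_or_ne n 0 with rfl | hn0
  · exact ⟨0, by rw [v_zero]; exact le_top, by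
      refine Finset.sum_eq_zero fun j _ => ?_
      rw [zero_pow (hppos j).ne', mul_zero]⟩
  -- main case: build the polynomial g
  set g : K[X] := (∑ j ∈ Finset.range (d + 1), C (a j) * X ^ (p ^ j)) - C n with hg
  have hinj : Function.Injective (p ^ · : ℕ → ℕ) := Nat.pow_right_injective hp.two_le
  have hai0 : a i ≠ 0 := by
    intro h
    rw [h, v_zero] at hai
    simp at hai
  have heval : ∀ x : K, g.eval x = (∑ j ∈ Finset.range (d + 1), a j * x ^ (p ^ j)) - n := by
    intro x
    simp [hg, eval_finset_sum]
  have hcoeffsum : ∀ k, (∑ j ∈ Finset.range (d + 1), C (a j) * X ^ (p ^ j) : K[X]).coeff k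
      = ∑ j ∈ Finset.range (d + 1), if k = p ^ j then a j else 0 := by
    intro k
    rw [finset_sum_coeff]
    exact Finset.sum_congr rfl fun j _ => by rw [coeff_C_mul, coeff_X_pow, mul_ite, mul_one, mul_zero]
  have hcoeff_pi : g.coeff (p ^ i) = a i := by
    rw [hg, coeff_sub, hcoeffsum, coeff_C, if_neg (hppos i).ne', sub_zero]
    have hcong : ∀ j ∈ Finset.range (d + 1),
        (if p ^ i = p ^ j then a j else 0) = (if i = j then a j else 0) := by
      intro j _
      by_cases h : i = j
      · subst h; simp
      · rw [if_neg h, if_neg fun he => h (hinj he)]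
    rw [Finset.sum_congr rfl hcong, Finset.sum_ite_eq, if_pos (Finset.mem_range.2 (by omega))]
  have hgne : g ≠ 0 := fun h => hai0 (by rw [← hcoeff_pi, h, coeff_zero])
  have hdge : p ^ i ≤ g.natDegree := le_natDegree_of_ne_zero (hcoeff_pi ▸ hai0)
  -- derivative and separability
  have hder : derivative g = C (a 0) := by
    rw [hg, derivative_sub, derivative_C, sub_zero, derivative_sum]
    rw [Finset.sum_eq_single 0]
    · simp
    · intro j hj hj0
      rw [derivative_C_mul, derivative_X_pow]
      have : ((p ^ j : ℕ) : K) = 0 := by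
        rw [Nat.cast_pow, CharP.cast_eq_zero K p, zero_pow hj0]
      rw [this, map_zero, zero_mul, mul_zero]
    · intro h
      exact absurd (Finset.mem_range.2 (by omega)) h
  have hsep : g.Separable := by
    rw [Polynomial.Separable, hder]
    exact ⟨0, C (a 0)⁻¹, by rw [zero_mul, zero_add, ← C_mul, inv_mul_cancel₀ ha0, C_1]⟩
  have hsplits : g.Splits := IsSepClosed.splits_of_separable g hsep
  have hroots : Multiset.card g.roots = g.natDegree := splits_iff_card_roots.mp hsplits
  set R := g.roots with hR
  have hRne : R ≠ 0 := by
    intro h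
    have hc := hroots
    rw [h] at hc
    simp only [Multiset.card_zero] at hc
    have h1 := hppos i
    omega
  obtain ⟨m, hmR, hmax⟩ := exists_max_image vf R hRne
  -- m is a root, so the sum equals n
  have hmroot : g.eval m = 0 := (mem_roots hgne).1 hmR
  have hsum : ∑ j ∈ Finset.range (d + 1), a j * m ^ (p ^ j) = n := by
    have h2 := heval m
    rw [hmroot] at h2
    exact sub_eq_zero.1 h2.symm
  refine ⟨m, ?_, hsum⟩
  -- now show 0 ≤ v m via the valuation argument
  have hm0 : m ≠ 0 := by
    intro h
    rw [h] at hsum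
    apply hn0
    rw [← hsum]
    exact Finset.sum_eq_zero fun j _ => by rw [zero_pow (hppos j).ne', mul_zero]
  set D := g.natDegree with hD
  set T : WithTop Γ := (R.map vf.v).sum with hT
  -- e1 : v n = v leadingCoeff + T
  have hfac := Polynomial.C_leadingCoeff_mul_prod_multiset_X_sub_C hroots
  have e1 : vf.v n = vf.v g.leadingCoeff + T := by
    have h0 : g.eval 0 = -n := by rw [heval]; simp [(hppos _).ne', zero_pow_eq, hp.ne_zero]
    have h1 : g.eval 0 = g.leadingCoeff * (R.map (fun r => -r)).prod := by
      conv_lhs => rw [← hfac]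
      rw [eval_mul, eval_C, eval_multiset_prod, Multiset.map_map]
      congr 1
      refine congrArg _ (Multiset.map_congr rfl fun r _ => ?_)
      simp
    rw [← v_neg vf n, ← h0, h1, vf.v_mul, v_mprod, Multiset.map_map]
    congr 1
    exact congrArg _ (Multiset.map_congr rfl fun r _ => v_neg vf r)
  -- e2 : 0 = v leadingCoeff + v esymm'
  have hco := Polynomial.coeff_eq_esymm_roots_of_card hroots hdge
  have e2 : (0 : WithTop Γ) = vf.v g.leadingCoeff + vf.v (R.esymm (D - p ^ i)) := by
    rw [← hai, ← hcoeff_pi, hco, vf.v_mul, vf.v_mul, v_pow, v_neg_one, nsmul_zero, add_zero]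
  -- e3 : T ≤ v esymm' + p^i • v m
  have e3 : T ≤ vf.v (R.esymm (D - p ^ i)) + (p ^ i) • vf.v m := by
    -- the multiset of products
    set S : Multiset K := (R.powersetCard (D - p ^ i)).map Multiset.prod with hS
    have hSne : S ≠ 0 := by
      have hcard : 0 < Multiset.card S := by
        rw [hS, Multiset.card_map, Multiset.card_powersetCard, hroots]
        exact Nat.choose_pos (Nat.sub_le _ _)
      intro h
      rw [h] at hcard
      simp at hcard
    obtain ⟨x, hxS, hxmin⟩ := exists_min_image vf S hSne
    have hesymm : vf.v x ≤ vf.v (R.esymm (D - p ^ i)) := v_msum_ge vf S hxmin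
    obtain ⟨t, htP, htx⟩ := Multiset.mem_map.1 hxS
    obtain ⟨htR, htcard⟩ := Multiset.mem_powersetCard.1 htP
    have hu : (R - t) + t = R := tsub_add_cancel_of_le htR
    have hucard : Multiset.card (R - t) = p ^ i := by
      rw [Multiset.card_sub htR]
      omega
    have hTsplit : T = ((R - t).map vf.v).sum + (t.map vf.v).sum := by
      rw [hT, ← hu, Multiset.map_add, Multiset.sum_add, hu]
    have hub : ((R - t).map vf.v).sum ≤ Multiset.card (R - t) • vf.v m := by
      have h2 := msum_le_card_nsmul ((R - t).map vf.v) (vf.v m) (fun y hy => by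
        obtain ⟨r, hr, rfl⟩ := Multiset.mem_map.1 hy
        have hrR : r ∈ R := Multiset.mem_of_le (tsub_le_self) hr
        exact hmax r hrR)
      rwa [Multiset.card_map] at h2
    calc T = ((R - t).map vf.v).sum + (t.map vf.v).sum := hTsplit
      _ ≤ Multiset.card (R - t) • vf.v m + vf.v x := by
          refine add_le_add hub ?_
          rw [← htx, v_mprod]
      _ ≤ (p ^ i) • vf.v m + vf.v (R.esymm (D - p ^ i)) := by
          rw [hucard]; exact add_le_add le_rfl hesymm
      _ = vf.v (R.esymm (D - p ^ i)) + (p ^ i) • vf.v m := add_comm _ _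
  -- combine
  have key : (0 : WithTop Γ) ≤ (p ^ i) • vf.v m := by
    calc (0 : WithTop Γ) ≤ vf.v n := hn
      _ = vf.v g.leadingCoeff + T := e1
      _ ≤ vf.v g.leadingCoeff + (vf.v (R.esymm (D - p ^ i)) + (p ^ i) • vf.v m) :=
          add_le_add le_rfl e3
      _ = (vf.v g.leadingCoeff + vf.v (R.esymm (D - p ^ i))) + (p ^ i) • vf.v m :=
          (add_assoc _ _ _).symm
      _ = 0 + (p ^ i) • vf.v m := by rw [← e2]
      _ = (p ^ i) • vf.v m := zero_add _
  lift vf.v m to Γ using v_ne_top vf hm0 with γ hγ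
  rw [show ((p ^ i) • (γ : WithTop Γ)) = ((p ^ i • γ : Γ) : WithTop Γ) by
      induction (p ^ i) with
      | zero => simp
      | succ k ih => rw [succ_nsmul, succ_nsmul, WithTop.coe_add, ih], ← WithTop.coe_zero,
    WithTop.coe_le_coe] at key
  rw [← WithTop.coe_zero, WithTop.coe_le_coe]
  by_contra hneg
  push_neg at hneg
  have hpos : 0 < (p ^ i) • (-γ) := nsmul_pos (neg_pos.2 hneg) (hppos i).ne'
  rw [neg_nsmul, neg_pos] at hpos
  exact absurd key (not_le.2 hpos)
end

section
/- Let (K, v) be a valued field of characteristic p > 0 and let c, e ∈ K with c ≠ 0 and e ≠ 0. (1) Every m ∈ K with m ≠ 0 and c·m^p = e·m satisfies (p − 1)·v(m) = v(e) − v(c); in particular, all nonzero such m have the same valuation. (2) If moreover K is separably closed, then for every n ∈ K with n ≠ 0 there exists m ∈ K with c·m^p − e·m = n, and the set {v(m) : m ∈ K, c·m^p − e·m = n} has at most two elements. -/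
section aux
variable {K : Type*} [Field K] {Γ : Type*} [AddCommGroup Γ] [LinearOrder Γ] [IsOrderedAddMonoid Γ]
  (vf : ValuedFieldAux K Γ)

lemma VFaux.ne_top {x : K} (hx : x ≠ 0) : vf.v x ≠ ⊤ := by
  simp [vf.v_eq_top_iff, hx]

lemma VFaux.v_one : vf.v 1 = 0 := by
  have h := vf.v_mul 1 1
  rw [one_mul] at h
  have ht := VFaux.ne_top vf (one_ne_zero (α := K))
  have : vf.v 1 + 0 = vf.v 1 + vf.v 1 := by rw [add_zero]; exact h
  exact (WithTop.add_left_cancel ht this).symm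

lemma VFaux.v_neg (x : K) : vf.v (-x) = vf.v x := by
  have h1 : vf.v (-1 : K) = 0 := by
    have h := vf.v_mul (-1) (-1)
    rw [neg_mul_neg, one_mul, VFaux.v_one vf] at h
    have ht := VFaux.ne_top vf (neg_ne_zero.mpr (one_ne_zero (α := K)))
    obtain ⟨γ, hγ⟩ := WithTop.ne_top_iff_exists.mp ht
    rw [← hγ] at h ⊢
    have hg : γ + γ = 0 := by exact_mod_cast h.symm
    have h0 : γ = 0 := by
      rcases lt_trichotomy γ 0 with h' | h' | h'
      · exact absurd hg (ne_of_lt (add_neg h' h'))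
      · exact h'
      · exact absurd hg (ne_of_gt (add_pos h' h'))
    rw [h0, WithTop.coe_zero]
  have := vf.v_mul (-1) x
  rw [neg_one_mul] at this
  rw [this, h1, zero_add]

lemma VFaux.v_pow (x : K) (k : ℕ) : vf.v (x ^ k) = k • vf.v x := by
  induction k with
  | zero => simp [VFaux.v_one vf]
  | succ k ih => rw [pow_succ, vf.v_mul, ih, succ_nsmul]

lemma VFaux.v_add_lt {x y : K} (h : vf.v x < vf.v y) : vf.v (x + y) = vf.v x := by
  have h1 : vf.v x ≤ vf.v (x + y) := by
    have := vf.v_add x y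
    rwa [min_eq_left h.le] at this
  have h2 : vf.v (x + y) ≤ vf.v x := by
    have h3 := vf.v_add (x + y) (-y)
    rw [add_neg_cancel_right, VFaux.v_neg vf] at h3
    rcases min_le_iff.mp h3 with h4 | h4
    · exact h4
    · exact absurd h4 (not_le.mpr h)
  exact le_antisymm h2 h1

lemma VFaux.cancel {m c e : K} (hm : m ≠ 0) {p : ℕ} (hp : 1 ≤ p)
    (h : vf.v c + p • vf.v m = vf.v e + vf.v m) :
    (p - 1) • vf.v m + vf.v c = vf.v e := by
  have hmt := VFaux.ne_top vf hm
  rw [show p = (p - 1) + 1 from (Nat.succ_pred_eq_of_pos hp).symm, succ_nsmul] at h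
  have h2 : ((p - 1) • vf.v m + vf.v c) + vf.v m = vf.v e + vf.v m := by
    rw [← h]; abel
  exact WithTop.add_right_cancel hmt h2

end aux

/-- Let `(K, v)` be a valued field of characteristic `p > 0` and
`c, e ∈ K` nonzero. (1) Every nonzero `m` with `c·m^p = e·m` satisfies
`(p − 1)·v m = v e − v c` (stated as `(p − 1)·v m + v c = v e`); in particular all
such `m` share the same valuation. (2) If moreover `K` is separably closed, then for
every `n ≠ 0` there is `m` with `c·m^p − e·m = n`, and the set of valuations of such
`m` has at most two elements. -/
theorem stmt_10 (p : ℕ) (hp : p.Prime) (K : Type*) [Field K] [CharP K p]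
    (Γ : Type*) [AddCommGroup Γ] [LinearOrder Γ] [IsOrderedAddMonoid Γ] (vf : ValuedFieldAux K Γ)
    (c e : K) (hc : c ≠ 0) (he : e ≠ 0) :
    (∀ m : K, m ≠ 0 → c * m ^ p = e * m → (p - 1) • vf.v m + vf.v c = vf.v e) ∧
    (IsSepClosed K → ∀ n : K, n ≠ 0 →
      (∃ m : K, c * m ^ p - e * m = n) ∧
      ∃ γ₁ γ₂ : WithTop Γ, ∀ m : K, c * m ^ p - e * m = n →
        vf.v m = γ₁ ∨ vf.v m = γ₂) := by
  have hp1 : 1 ≤ p := hp.one_lt.le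
  have hct := VFaux.ne_top vf hc
  have het := VFaux.ne_top vf he
  -- nsmul injectivity on non-top elements
  have nsmul_inj : ∀ (k : ℕ), k ≠ 0 → ∀ x y : WithTop Γ, x ≠ ⊤ → y ≠ ⊤ →
      k • x = k • y → x = y := by
    intro k hk x y hx hy h
    obtain ⟨γ, rfl⟩ := WithTop.ne_top_iff_exists.mp hx
    obtain ⟨δ, rfl⟩ := WithTop.ne_top_iff_exists.mp hy
    rw [← WithTop.coe_nsmul, ← WithTop.coe_nsmul] at h
    have : k • γ = k • δ := by exact_mod_cast h
    rw [(nsmul_right_strictMono hk).injective this]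
  have part1 : ∀ m : K, m ≠ 0 → c * m ^ p = e * m →
      (p - 1) • vf.v m + vf.v c = vf.v e := by
    intro m hm h
    have h1 := vf.v_mul c (m ^ p)
    rw [h, vf.v_mul, VFaux.v_pow vf] at h1
    exact VFaux.cancel vf hm hp1 h1.symm
  refine ⟨part1, ?_⟩
  intro hsc n hn
  haveI := hsc
  constructor
  · -- existence of a root
    set f : Polynomial K := Polynomial.C c * Polynomial.X ^ p -
      (Polynomial.C e * Polynomial.X + Polynomial.C n) with hf
    have hdeg1 : (Polynomial.C c * Polynomial.X ^ p : Polynomial K).degree = p :=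
      Polynomial.degree_C_mul_X_pow p hc
    have hdeg2 : (Polynomial.C e * Polynomial.X + Polynomial.C n : Polynomial K).degree <
        (Polynomial.C c * Polynomial.X ^ p : Polynomial K).degree := by
      rw [hdeg1]
      refine lt_of_le_of_lt (Polynomial.degree_add_le _ _) ?_
      refine max_lt (lt_of_le_of_lt (Polynomial.degree_C_mul_X_le e) ?_)
        (lt_of_le_of_lt Polynomial.degree_C_le ?_)
      · exact_mod_cast Nat.one_lt_cast.mpr hp.one_lt
      · exact_mod_cast hp.pos
    have hdegf : f.degree = p := by
      rw [hf, Polynomial.degree_sub_eq_left_of_degree_lt hdeg2, hdeg1]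
    have hder : Polynomial.derivative f = Polynomial.C (-e) := by
      rw [hf]
      simp [Polynomial.derivative_sub, Polynomial.derivative_C_mul,
        CharP.cast_eq_zero K p, Polynomial.derivative_X_pow]
    have hsep : f.Separable := by
      rw [Polynomial.Separable, hder]
      refine ⟨0, Polynomial.C (-e)⁻¹, ?_⟩
      rw [zero_mul, zero_add, ← Polynomial.C_mul, inv_mul_cancel₀ (neg_ne_zero.mpr he),
        Polynomial.C_1]
    obtain ⟨m, hm⟩ := IsSepClosed.exists_root f
      (by rw [hdegf]; exact_mod_cast hp.pos.ne') hsep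
    refine ⟨m, ?_⟩
    have := hm
    rw [Polynomial.IsRoot, hf] at this
    simp only [Polynomial.eval_sub, Polynomial.eval_add, Polynomial.eval_mul,
      Polynomial.eval_pow, Polynomial.eval_C, Polynomial.eval_X] at this
    linear_combination this
  · -- at most two valuations
    have hnz : ∀ m : K, c * m ^ p - e * m = n → m ≠ 0 := by
      rintro m h rfl
      simp [zero_pow hp.pos.ne'] at h
      exact hn h.symm
    have key : ∀ m : K, c * m ^ p - e * m = n →
        (vf.v c + p • vf.v m = vf.v n ∧ vf.v c + p • vf.v m < vf.v e + vf.v m) ∨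
        (vf.v e + vf.v m = vf.v n ∧ vf.v e + vf.v m < vf.v c + p • vf.v m) ∨
        ((p - 1) • vf.v m + vf.v c = vf.v e) := by
      intro m hm
      have hA : vf.v (c * m ^ p) = vf.v c + p • vf.v m := by
        rw [vf.v_mul, VFaux.v_pow vf]
      have hB : vf.v (e * m) = vf.v e + vf.v m := vf.v_mul e m
      rcases lt_trichotomy (vf.v (c * m ^ p)) (vf.v (e * m)) with h | h | h
      · left
        have h2 : vf.v (c * m ^ p) < vf.v (-(e * m)) := by rwa [VFaux.v_neg vf]
        have h3 : vf.v (c * m ^ p + -(e * m)) = vf.v (c * m ^ p) :=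
          VFaux.v_add_lt vf h2
        rw [← sub_eq_add_neg, hm, hA] at h3
        exact ⟨h3.symm, by rw [← hA, ← hB]; exact h⟩
      · right; right
        rw [hA, hB] at h
        exact VFaux.cancel vf (hnz m hm) hp1 h
      · right; left
        have h2 : vf.v (-(e * m)) < vf.v (c * m ^ p) := by rwa [VFaux.v_neg vf]
        have h3 : vf.v (-(e * m) + c * m ^ p) = vf.v (-(e * m)) := VFaux.v_add_lt vf h2
        rw [show -(e * m) + c * m ^ p = c * m ^ p - e * m by ring, hm,
          VFaux.v_neg vf, hB] at h3
        exact ⟨h3.symm, by rw [← hA, ← hB]; exact h⟩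
    -- exclusivity of cases A and B
    have excl : ∀ m m' : K, m ≠ 0 → m' ≠ 0 →
        vf.v c + p • vf.v m = vf.v n → vf.v c + p • vf.v m < vf.v e + vf.v m →
        vf.v e + vf.v m' = vf.v n → vf.v e + vf.v m' < vf.v c + p • vf.v m' → False := by
      intro m m' hm hm' h1 h2 h3 h4
      have hmt := VFaux.ne_top vf hm
      have hm't := VFaux.ne_top vf hm'
      have hsm : ∀ z : WithTop Γ, p • z = (p - 1) • z + z := by
        intro z
        conv_lhs => rw [show p = (p - 1) + 1 from (Nat.succ_pred_eq_of_pos hp1).symm]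
        rw [succ_nsmul]
      rw [hsm, ← add_assoc] at h2 h4 h1
      replace h2 : vf.v c + (p - 1) • vf.v m < vf.v e :=
        (WithTop.add_lt_add_iff_right hmt).mp h2
      replace h4 : vf.v e < vf.v c + (p - 1) • vf.v m' :=
        (WithTop.add_lt_add_iff_right hm't).mp h4
      -- (p-1) • v m < (p-1) • v m' hence v m < v m'
      have h5 : (p - 1) • vf.v m < (p - 1) • vf.v m' :=
        (WithTop.add_lt_add_iff_left hct).mp (h2.trans h4)
      have h6 : vf.v m < vf.v m' := by
        by_contra h7
        push_neg at h7
        exact absurd (nsmul_le_nsmul_right h7 (p - 1)) (not_le.mpr h5)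
      -- from h1 = h3 and h2: v m' < v m
      have h8 : vf.v c + (p - 1) • vf.v m + vf.v m = vf.v e + vf.v m' := h1.trans h3.symm
      have h9 : vf.v c + (p - 1) • vf.v m + vf.v m < vf.v e + vf.v m :=
        (WithTop.add_lt_add_iff_right hmt).mpr h2
      rw [h8] at h9
      have h10 : vf.v m' < vf.v m := (WithTop.add_lt_add_iff_left het).mp h9
      exact absurd h10 (not_lt.mpr h6.le)
    -- uniqueness helpers for each case
    have uA : ∀ m m' : K, c * m ^ p - e * m = n → c * m' ^ p - e * m' = n →
        vf.v c + p • vf.v m = vf.v n → vf.v c + p • vf.v m' = vf.v n →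
        vf.v m = vf.v m' := by
      intro m m' hm hm' h h'
      have : p • vf.v m = p • vf.v m' := WithTop.add_left_cancel hct (h.trans h'.symm)
      exact nsmul_inj p hp.pos.ne' _ _ (VFaux.ne_top vf (hnz m hm))
        (VFaux.ne_top vf (hnz m' hm')) this
    have uB : ∀ m m' : K, vf.v e + vf.v m = vf.v n → vf.v e + vf.v m' = vf.v n →
        vf.v m = vf.v m' := by
      intro m m' h h'
      exact WithTop.add_left_cancel het (h.trans h'.symm)
    have uC : ∀ m m' : K, c * m ^ p - e * m = n → c * m' ^ p - e * m' = n →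
        (p - 1) • vf.v m + vf.v c = vf.v e → (p - 1) • vf.v m' + vf.v c = vf.v e →
        vf.v m = vf.v m' := by
      intro m m' hm hm' h h'
      have : (p - 1) • vf.v m = (p - 1) • vf.v m' :=
        WithTop.add_right_cancel hct (h.trans h'.symm)
      exact nsmul_inj (p - 1) (Nat.sub_ne_zero_of_lt hp.one_lt) _ _ (VFaux.ne_top vf (hnz m hm))
        (VFaux.ne_top vf (hnz m' hm')) this
    -- choose the two values by cases
    by_cases hC : ∃ m : K, (c * m ^ p - e * m = n) ∧ (p - 1) • vf.v m + vf.v c = vf.v e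
    · obtain ⟨m₂, hm₂, h₂⟩ := hC
      by_cases hA : ∃ m : K, (c * m ^ p - e * m = n) ∧
          vf.v c + p • vf.v m = vf.v n ∧ vf.v c + p • vf.v m < vf.v e + vf.v m
      · obtain ⟨m₁, hm₁, h₁, h₁'⟩ := hA
        refine ⟨vf.v m₁, vf.v m₂, fun m hm => ?_⟩
        rcases key m hm with ⟨ha, ha'⟩ | ⟨hb, hb'⟩ | hcc
        · exact Or.inl (uA m m₁ hm hm₁ ha h₁)
        · exact (excl m₁ m (hnz m₁ hm₁) (hnz m hm) h₁ h₁' hb hb').elim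
        · exact Or.inr (uC m m₂ hm hm₂ hcc h₂)
      · by_cases hB : ∃ m : K, (c * m ^ p - e * m = n) ∧ vf.v e + vf.v m = vf.v n
        · obtain ⟨m₁, hm₁, h₁⟩ := hB
          refine ⟨vf.v m₁, vf.v m₂, fun m hm => ?_⟩
          rcases key m hm with ⟨ha, ha'⟩ | ⟨hb, hb'⟩ | hcc
          · exact absurd ⟨m, hm, ha, ha'⟩ hA
          · exact Or.inl (uB m m₁ hb h₁)
          · exact Or.inr (uC m m₂ hm hm₂ hcc h₂)
        · refine ⟨⊤, vf.v m₂, fun m hm => ?_⟩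
          rcases key m hm with ⟨ha, ha'⟩ | ⟨hb, hb'⟩ | hcc
          · exact absurd ⟨m, hm, ha, ha'⟩ hA
          · exact absurd ⟨m, hm, hb⟩ hB
          · exact Or.inr (uC m m₂ hm hm₂ hcc h₂)
    · by_cases hA : ∃ m : K, (c * m ^ p - e * m = n) ∧
          vf.v c + p • vf.v m = vf.v n ∧ vf.v c + p • vf.v m < vf.v e + vf.v m
      · obtain ⟨m₁, hm₁, h₁, h₁'⟩ := hA
        refine ⟨vf.v m₁, ⊤, fun m hm => ?_⟩
        rcases key m hm with ⟨ha, ha'⟩ | ⟨hb, hb'⟩ | hcc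
        · exact Or.inl (uA m m₁ hm hm₁ ha h₁)
        · exact (excl m₁ m (hnz m₁ hm₁) (hnz m hm) h₁ h₁' hb hb').elim
        · exact absurd ⟨m, hm, hcc⟩ hC
      · by_cases hB : ∃ m : K, (c * m ^ p - e * m = n) ∧ vf.v e + vf.v m = vf.v n
        · obtain ⟨m₁, hm₁, h₁⟩ := hB
          refine ⟨vf.v m₁, ⊤, fun m hm => ?_⟩
          rcases key m hm with ⟨ha, ha'⟩ | ⟨hb, hb'⟩ | hcc
          · exact absurd ⟨m, hm, ha, ha'⟩ hA
          · exact Or.inl (uB m m₁ hb h₁)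
          · exact absurd ⟨m, hm, hcc⟩ hC
        · refine ⟨⊤, ⊤, fun m hm => ?_⟩
          rcases key m hm with ⟨ha, ha'⟩ | ⟨hb, hb'⟩ | hcc
          · exact absurd ⟨m, hm, ha, ha'⟩ hA
          · exact absurd ⟨m, hm, hb⟩ hB
          · exact absurd ⟨m, hm, hcc⟩ hC
end
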